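/- arXiv:2408.15539 — 2 statements merged into one kernel-verified Lean document; each statement's English description precedes it below -/
import Mathlib

section
/- For every η > 0, the Laplace-type integral F(η) = ∫_0^{+∞} e^{-t} f(t^{-1/2} η) dt equals 1 - (1/2)e^{-η}, and for every η ≤ 0 it equals (1/2)e^{η}, where f(ξ) = (1/(2√π)) ∫_{-∞}^{ξ} e^{-s²/4} ds. -/
open Real Set

noncomputable def fGauss (ξ : ℝ) : ℝ :=
  (1 / (2 * Real.sqrt π)) * ∫ s in Set.Iic ξ, Real.exp (-s ^ 2 / 4)

noncomputable def FLap (η : ℝ) : ℝ :=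
  ∫ t in Set.Ioi (0 : ℝ), Real.exp (-t) * fGauss (η / Real.sqrt t)

open MeasureTheory

lemma gauss4_eq : (fun s : ℝ => Real.exp (-s ^ 2 / 4)) = fun s : ℝ => Real.exp (-(1/4 : ℝ) * s ^ 2) := by
  funext s; ring_nf

lemma integrable_gauss4 : Integrable (fun s : ℝ => Real.exp (-s ^ 2 / 4)) := by
  rw [gauss4_eq]; exact integrable_exp_neg_mul_sq (by norm_num)

lemma integral_gauss4 : (∫ s : ℝ, Real.exp (-s ^ 2 / 4)) = 2 * Real.sqrt π := by
  rw [gauss4_eq, integral_gaussian]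
  rw [show π / (1/4 : ℝ) = 4 * π by ring, show (4:ℝ) * π = 2^2 * π by norm_num,
    Real.sqrt_mul (by positivity), Real.sqrt_sq (by norm_num)]

lemma fGauss_nonneg (ξ : ℝ) : 0 ≤ fGauss ξ := by
  apply mul_nonneg (by positivity)
  exact setIntegral_nonneg measurableSet_Iic (fun s _ => (Real.exp_pos _).le)

lemma fGauss_le_one (ξ : ℝ) : fGauss ξ ≤ 1 := by
  have h1 : (∫ s in Set.Iic ξ, Real.exp (-s ^ 2 / 4)) ≤ ∫ s : ℝ, Real.exp (-s ^ 2 / 4) := by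
    apply setIntegral_le_integral integrable_gauss4
    filter_upwards with s using (Real.exp_pos _).le
  have hπ : (0:ℝ) < Real.sqrt π := Real.sqrt_pos.2 Real.pi_pos
  calc fGauss ξ ≤ (1 / (2 * Real.sqrt π)) * (2 * Real.sqrt π) := by
        apply mul_le_mul_of_nonneg_left _ (by positivity)
        rw [← integral_gauss4]; exact h1
    _ = 1 := by field_simp

lemma fGauss_mono : Monotone fGauss := by
  intro a b hab
  apply mul_le_mul_of_nonneg_left _ (by positivity)
  apply setIntegral_mono_set integrable_gauss4.integrableOn
  · filter_upwards with s using (Real.exp_pos _).le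
  · exact HasSubset.Subset.eventuallyLE (Iic_subset_Iic.2 hab)

lemma fGauss_add_neg (ξ : ℝ) : fGauss ξ + fGauss (-ξ) = 1 := by
  have h2 : (∫ s in Set.Iic (-ξ), Real.exp (-s ^ 2 / 4))
      = ∫ s in Set.Ioi ξ, Real.exp (-s ^ 2 / 4) := by
    rw [← integral_comp_neg_Ioi]
    congr 1; funext s; ring_nf
  have h3 := intervalIntegral.integral_Iic_add_Ioi (b := ξ) integrable_gauss4.integrableOn integrable_gauss4.integrableOn
  have hπ : (0:ℝ) < Real.sqrt π := Real.sqrt_pos.2 Real.pi_pos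
  rw [fGauss, fGauss, h2, ← mul_add, h3, integral_gauss4]
  field_simp

lemma fGauss_zero : fGauss 0 = 1 / 2 := by
  have := fGauss_add_neg 0
  rw [neg_zero] at this; linarith

lemma fGauss_measurable : Measurable fGauss := fGauss_mono.measurable

lemma FLap_integrable (η : ℝ) :
    IntegrableOn (fun t => Real.exp (-t) * fGauss (η / Real.sqrt t)) (Set.Ioi 0) := by
  apply Integrable.mono' (g := fun t => Real.exp (-t))
  · exact exp_neg_integrableOn_Ioi 0 one_pos |>.congr_fun (by intro t ht; simp) measurableSet_Ioi
  · exact ((measurable_exp.comp measurable_neg).mul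
      (fGauss_measurable.comp ((measurable_const.div Real.continuous_sqrt.measurable)))).aestronglyMeasurable
  · filter_upwards with t
    rw [norm_mul, Real.norm_eq_abs, Real.norm_eq_abs, abs_of_pos (Real.exp_pos _),
      abs_of_nonneg (fGauss_nonneg _)]
    nlinarith [fGauss_le_one (η / Real.sqrt t), Real.exp_pos (-t), fGauss_nonneg (η / Real.sqrt t)]

lemma FLap_add (η : ℝ) : FLap η + FLap (-η) = 1 := by
  rw [FLap, FLap, ← integral_add (FLap_integrable η) (FLap_integrable (-η))]
  rw [show (1:ℝ) = ∫ t in Set.Ioi (0:ℝ), Real.exp (-t) from integral_exp_neg_Ioi_zero.symm]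
  apply setIntegral_congr_fun measurableSet_Ioi
  intro t ht
  have := fGauss_add_neg (η / Real.sqrt t)
  simp only [neg_div] at *
  rw [← mul_add, this, mul_one]

lemma FLap_zero : FLap 0 = 1 / 2 := by
  rw [FLap]
  have : ∀ t : ℝ, Real.exp (-t) * fGauss (0 / Real.sqrt t) = Real.exp (-t) * (1/2) := by
    intro t; rw [zero_div, fGauss_zero]
  simp_rw [this]
  rw [integral_mul_const, integral_exp_neg_Ioi_zero, one_mul]

noncomputable def HH (η t s : ℝ) : ℝ :=
  if 0 < t ∧ s ≤ η / Real.sqrt t then Real.exp (-t) * Real.exp (-s ^ 2 / 4) else 0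

lemma step1 (η : ℝ) :
    FLap η = (1 / (2 * Real.sqrt π)) * ∫ t : ℝ, ∫ s : ℝ, HH η t s := by
  have hpt : ∀ t ∈ Set.Ioi (0:ℝ), Real.exp (-t) * fGauss (η / Real.sqrt t)
      = (1 / (2 * Real.sqrt π)) * ∫ s : ℝ, HH η t s := by
    intro t ht
    have h1 : (fun s : ℝ => HH η t s)
        = (Set.Iic (η / Real.sqrt t)).indicator
            (fun s => Real.exp (-t) * Real.exp (-s ^ 2 / 4)) := by
      have ht' : 0 < t := ht
      funext s; simp [HH, Set.indicator_apply, ht']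
    rw [h1, integral_indicator measurableSet_Iic, integral_const_mul, fGauss]
    ring
  rw [FLap, setIntegral_congr_fun measurableSet_Ioi hpt, integral_const_mul]
  congr 1
  rw [← integral_indicator measurableSet_Ioi]
  congr 1
  funext t
  by_cases ht : 0 < t
  · simp [Set.indicator_apply, ht]
  · have : ∀ s : ℝ, HH η t s = 0 := by intro s; simp [HH, ht]
    simp [Set.indicator_apply, ht, this]

lemma HH_integrable (η : ℝ) : Integrable (Function.uncurry (HH η)) := by
  have hmeasA : MeasurableSet {p : ℝ × ℝ | 0 < p.1 ∧ p.2 ≤ η / Real.sqrt p.1} := by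
    apply MeasurableSet.inter
    · exact measurableSet_lt measurable_const measurable_fst
    · exact measurableSet_le measurable_snd
        (measurable_const.div (Real.continuous_sqrt.measurable.comp measurable_fst))
  have hg : Integrable (fun p : ℝ × ℝ =>
      (Set.Ioi (0:ℝ)).indicator (fun x => Real.exp (-x)) p.1 * Real.exp (-p.2 ^ 2 / 4)) := by
    rw [Measure.volume_eq_prod]
    have h1 : Integrable ((Set.Ioi (0:ℝ)).indicator (fun x => Real.exp (-x))) :=
      (exp_neg_integrableOn_Ioi 0 one_pos |>.congr_fun (by intro t ht; simp)
        measurableSet_Ioi).integrable_indicator measurableSet_Ioi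
    exact h1.mul_prod integrable_gauss4
  apply Integrable.mono' hg
  · apply Measurable.aestronglyMeasurable
    apply Measurable.ite hmeasA _ measurable_const
    exact ((measurable_exp.comp measurable_fst.neg).mul
      (measurable_exp.comp ((measurable_snd.pow measurable_const).neg.div measurable_const)))
  · filter_upwards with p
    rcases p with ⟨t, s⟩
    simp only [Function.uncurry, HH]
    split_ifs with h
    · rw [Set.indicator_of_mem (Set.mem_Ioi.mpr h.1), Real.norm_eq_abs,
        abs_of_pos (mul_pos (Real.exp_pos _) (Real.exp_pos _))]
    · simp only [norm_zero]
      apply mul_nonneg _ (Real.exp_pos _).le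
      exact Set.indicator_nonneg (fun x _ => (Real.exp_pos _).le) _

lemma cond_iff {η s : ℝ} (hη : η < 0) (hs : s < 0) (t : ℝ) :
    (0 < t ∧ s ≤ η / Real.sqrt t) ↔ (η / s) ^ 2 ≤ t := by
  have hds : 0 < η / s := div_pos_of_neg_of_neg hη hs
  constructor
  · rintro ⟨ht, hle⟩
    have hst : 0 < Real.sqrt t := Real.sqrt_pos.2 ht
    have h1 : s * Real.sqrt t ≤ η := (le_div_iff₀ hst).mp hle
    have h2 : η / s ≤ Real.sqrt t := (div_le_iff_of_neg hs).mpr (by linarith [mul_comm s (Real.sqrt t)])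
    calc (η / s) ^ 2 ≤ (Real.sqrt t) ^ 2 := by nlinarith
      _ = t := Real.sq_sqrt ht.le
  · intro hat
    have ht : 0 < t := lt_of_lt_of_le (by positivity) hat
    have hst : 0 < Real.sqrt t := Real.sqrt_pos.2 ht
    have h2 : η / s ≤ Real.sqrt t := by
      calc η / s = Real.sqrt ((η / s) ^ 2) := (Real.sqrt_sq hds.le).symm
        _ ≤ Real.sqrt t := Real.sqrt_le_sqrt hat
    refine ⟨ht, (le_div_iff₀ hst).mpr ?_⟩
    have := (div_le_iff_of_neg hs).mp h2
    linarith [mul_comm (Real.sqrt t) s]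

lemma inner_integral {η : ℝ} (hη : η < 0) (s : ℝ) :
    (∫ t : ℝ, HH η t s) =
      (Set.Iio (0:ℝ)).indicator (fun s => Real.exp (-(η / s) ^ 2) * Real.exp (-s ^ 2 / 4)) s := by
  by_cases hs : s < 0
  · have h1 : (fun t : ℝ => HH η t s)
        = (Set.Ici ((η / s) ^ 2)).indicator (fun t => Real.exp (-t) * Real.exp (-s ^ 2 / 4)) := by
      funext t
      simp only [HH, Set.indicator_apply, Set.mem_Ici, cond_iff hη hs t]
    rw [h1, integral_indicator measurableSet_Ici, integral_Ici_eq_integral_Ioi,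
      integral_mul_const, integral_exp_neg_Ioi, Set.indicator_of_mem (Set.mem_Iio.mpr hs)]
  · have h1 : ∀ t : ℝ, HH η t s = 0 := by
      intro t
      rw [HH, if_neg]
      rintro ⟨ht, hle⟩
      have : η / Real.sqrt t < 0 := div_neg_of_neg_of_pos hη (Real.sqrt_pos.2 ht)
      push_neg at hs
      linarith
    rw [Set.indicator_of_notMem (by simpa using hs)]
    simp only [h1, integral_zero]

section Subst
variable {b : ℝ}

noncomputable def ww (b v : ℝ) : ℝ := Real.sqrt (v ^ 2 + 4 * b)
noncomputable def φφ (b v : ℝ) : ℝ := -(v + ww b v)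

lemma ww_sq (hb : 0 < b) (v : ℝ) : (ww b v) ^ 2 = v ^ 2 + 4 * b :=
  Real.sq_sqrt (by positivity)

lemma abs_lt_ww (hb : 0 < b) (v : ℝ) : |v| < ww b v := by
  have h1 : |v| = Real.sqrt (v ^ 2) := (Real.sqrt_sq_eq_abs v).symm
  rw [h1, ww]
  exact Real.sqrt_lt_sqrt (sq_nonneg v) (by linarith)

lemma ww_pos (hb : 0 < b) (v : ℝ) : 0 < ww b v := lt_of_le_of_lt (abs_nonneg v) (abs_lt_ww hb v)

lemma φφ_neg (hb : 0 < b) (v : ℝ) : φφ b v < 0 := by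
  have := abs_lt_ww hb v
  have := abs_nonneg v
  have h2 : -v ≤ |v| := neg_le_abs v
  rw [φφ]; nlinarith

lemma φφ_hasDeriv (hb : 0 < b) (v : ℝ) :
    HasDerivAt (φφ b) (-(1 + v / ww b v)) v := by
  have h1 : HasDerivAt (fun v : ℝ => v ^ 2 + 4 * b) (2 * v) v := by
    simpa using ((hasDerivAt_pow 2 v).add_const (4 * b))
  have h2 : HasDerivAt (fun v : ℝ => Real.sqrt (v ^ 2 + 4 * b))
      ((2 * v) / (2 * Real.sqrt (v ^ 2 + 4 * b))) v :=
    h1.sqrt (by positivity)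
  have h3 : (2 * v) / (2 * Real.sqrt (v ^ 2 + 4 * b)) = v / ww b v := by
    rw [ww, mul_div_mul_left _ _ (two_ne_zero)]
  rw [h3] at h2
  exact ((hasDerivAt_id v).add h2).neg

lemma φφ_deriv_factor_pos (hb : 0 < b) (v : ℝ) : 0 < 1 + v / ww b v := by
  have hw := ww_pos hb v
  have habs := abs_lt_ww hb v
  have : -1 < v / ww b v := by
    rw [lt_div_iff₀ hw]
    nlinarith [neg_abs_le v]
  linarith

lemma φφ_strictAnti (hb : 0 < b) : StrictAnti (φφ b) := by
  apply strictAnti_of_deriv_neg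
  intro v
  rw [(φφ_hasDeriv hb v).deriv]
  linarith [φφ_deriv_factor_pos hb v]

lemma φφ_image (hb : 0 < b) : (φφ b) '' Set.univ = Set.Iio 0 := by
  apply Set.eq_of_subset_of_subset
  · rintro x ⟨v, -, rfl⟩
    exact Set.mem_Iio.mpr (φφ_neg hb v)
  · intro x hx
    have hx0 : x < 0 := hx
    set u : ℝ := -x / 2 with hu
    have hu0 : 0 < u := by rw [hu]; linarith
    refine ⟨(u ^ 2 - b) / u, Set.mem_univ _, ?_⟩
    set v : ℝ := (u ^ 2 - b) / u with hv
    have hww : ww b v = u + b / u := by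
      rw [ww]
      have : v ^ 2 + 4 * b = (u + b / u) ^ 2 := by
        rw [hv]; field_simp; ring
      rw [this, Real.sqrt_sq (by positivity)]
    rw [φφ, hww, hv]
    have h2u : (u ^ 2 - b) / u + (u + b / u) = 2 * u := by field_simp; ring
    rw [h2u, hu]; ring

end Subst

lemma integrable_exp_neg_sq' : Integrable (fun v : ℝ => Real.exp (-v ^ 2)) := by
  have := integrable_exp_neg_mul_sq (b := 1) one_pos
  simpa using this

lemma ww_continuous (b : ℝ) : Continuous (ww b) :=
  Real.continuous_sqrt.comp (by continuity)

lemma odd_part_integrable (hb : 0 < b) :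
    Integrable (fun v : ℝ => v / ww b v * Real.exp (-v ^ 2)) := by
  apply Integrable.mono' integrable_exp_neg_sq'
  · apply Continuous.aestronglyMeasurable
    exact (continuous_id.div (ww_continuous b) (fun v => (ww_pos hb v).ne')).mul
      (Real.continuous_exp.comp (continuous_pow 2).neg)
  · filter_upwards with v
    rw [norm_mul, Real.norm_eq_abs, Real.norm_eq_abs, abs_of_pos (Real.exp_pos _)]
    have h1 : |v / ww b v| ≤ 1 := by
      rw [abs_div, abs_of_pos (ww_pos hb v), div_le_one (ww_pos hb v)]
      exact (abs_lt_ww hb v).le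
    nlinarith [Real.exp_pos (-v ^ 2), abs_nonneg (v / ww b v)]

lemma odd_part_zero (hb : 0 < b) :
    (∫ v : ℝ, v / ww b v * Real.exp (-v ^ 2)) = 0 := by
  have h := integral_neg_eq_self (fun v : ℝ => v / ww b v * Real.exp (-v ^ 2)) volume
  have h2 : ∀ v : ℝ, (-v) / ww b (-v) * Real.exp (-(-v) ^ 2)
      = -(v / ww b v * Real.exp (-v ^ 2)) := by
    intro v
    have : ww b (-v) = ww b v := by rw [ww, ww, neg_pow]; ring_nf
    rw [this, neg_sq, neg_div]; ring
  simp_rw [h2, integral_neg] at h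
  linarith

lemma integral_exp_neg_sq' : (∫ v : ℝ, Real.exp (-v ^ 2)) = Real.sqrt π := by
  have := integral_gaussian 1
  simpa using this

lemma key_algebra {η : ℝ} (hη : η < 0) (v : ℝ) :
    (η / φφ (-η / 2) v) ^ 2 + (φφ (-η / 2) v) ^ 2 / 4 = v ^ 2 + 2 * (-η / 2) := by
  have hb : 0 < -η / 2 := by linarith
  have hw2 := ww_sq hb v
  have hvw : 0 < v + ww (-η / 2) v := by nlinarith [abs_lt_ww hb v, neg_abs_le v]
  rw [φφ]
  set w := ww (-η / 2) v with hw
  clear_value w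
  have hne : v + w ≠ 0 := ne_of_gt hvw
  simp only [div_neg, neg_neg, neg_sq]
  field_simp
  linear_combination (w ^ 2 + 4 * v * w + 3 * v ^ 2 + 2 * η) * hw2

lemma FLap_of_neg {η : ℝ} (hη : η < 0) : FLap η = 1 / 2 * Real.exp η := by
  have hb : 0 < -η / 2 := by linarith
  rw [step1, integral_integral_swap (HH_integrable η)]
  simp_rw [inner_integral hη]
  rw [integral_indicator measurableSet_Iio, ← φφ_image hb,
    integral_image_eq_integral_abs_deriv_smul MeasurableSet.univ
      (fun v _ => (φφ_hasDeriv hb v).hasDerivWithinAt) ((φφ_strictAnti hb).injective.injOn),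
    Measure.restrict_univ]
  have hpt : ∀ v : ℝ, |(-(1 + v / ww (-η / 2) v))| •
      (Real.exp (-(η / φφ (-η / 2) v) ^ 2) * Real.exp (-(φφ (-η / 2) v) ^ 2 / 4))
      = Real.exp η * Real.exp (-v ^ 2) + Real.exp η * (v / ww (-η / 2) v * Real.exp (-v ^ 2)) := by
    intro v
    have h1 : Real.exp (-(η / φφ (-η / 2) v) ^ 2) * Real.exp (-(φφ (-η / 2) v) ^ 2 / 4)
        = Real.exp (-v ^ 2) * Real.exp η := by
      rw [← Real.exp_add, ← Real.exp_add]
      congr 1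
      have hk := key_algebra hη v
      linarith
    rw [h1, abs_neg, abs_of_pos (φφ_deriv_factor_pos hb v), smul_eq_mul]
    ring
  rw [show (fun v : ℝ => |(-(1 + v / ww (-η / 2) v))| •
      (Real.exp (-(η / φφ (-η / 2) v) ^ 2) * Real.exp (-(φφ (-η / 2) v) ^ 2 / 4)))
      = fun v : ℝ => Real.exp η * Real.exp (-v ^ 2)
        + Real.exp η * (v / ww (-η / 2) v * Real.exp (-v ^ 2)) from funext hpt]
  rw [integral_add (integrable_exp_neg_sq'.const_mul _) ((odd_part_integrable hb).const_mul _),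
    integral_const_mul, integral_const_mul, odd_part_zero hb, integral_exp_neg_sq']
  have hπ : (0:ℝ) < Real.sqrt π := Real.sqrt_pos.2 Real.pi_pos
  field_simp
  ring

theorem stmt_2 :
    (∀ η : ℝ, 0 < η → FLap η = 1 - (1 / 2) * Real.exp (-η)) ∧
    (∀ η : ℝ, η ≤ 0 → FLap η = (1 / 2) * Real.exp η) := by
  have hneg : ∀ η : ℝ, η ≤ 0 → FLap η = (1 / 2) * Real.exp η := by
    intro η hη
    rcases lt_or_eq_of_le hη with h | h
    · exact FLap_of_neg h
    · rw [h, FLap_zero, Real.exp_zero]; norm_num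
  refine ⟨fun η hη => ?_, hneg⟩
  have h1 := FLap_add η
  have h2 := hneg (-η) (by linarith)
  linarith
end

section
/- Karamata's Tauberian theorem: let μ be a measure on [0, ∞) such that t ↦ e^{−λt} is μ-integrable for every λ > 0, and suppose for some α > 0 and A > 0 that λ^α ∫_0^∞ e^{−λt} dμ(t) → A as λ → +∞. Then t^{−α} μ([0,t]) → A/Γ(α+1) as t → 0⁺. -/
open Real Filter MeasureTheory
open Set
lemma kt_integrableOn_rpow_exp {α r : ℝ} (hα : 0 < α) (hr : 0 < r) :
    IntegrableOn (fun t : ℝ => t ^ (α - 1) * Real.exp (-(r * t))) (Set.Ioi 0) := by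
  have h : IntegrableOn (fun t : ℝ => Real.exp (-(r * t)) * (r * t) ^ (α - 1)) (Set.Ioi 0) := by
    have := (integrableOn_Ioi_comp_mul_left_iff
      (fun x : ℝ => Real.exp (-x) * x ^ (α - 1)) 0 hr).2
    simpa using this (by simpa using Real.GammaIntegral_convergent hα)
  have h2 := h.const_mul (r ^ (α - 1))⁻¹
  refine IntegrableOn.congr_fun h2 (fun t ht => ?_) measurableSet_Ioi
  have : (r * t) ^ (α - 1) = r ^ (α - 1) * t ^ (α - 1) :=
    Real.mul_rpow hr.le (le_of_lt ht)
  rw [this]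
  field_simp

lemma kt_scaled_limit (μ : Measure ℝ) (α A : ℝ)
    (hLap : Tendsto (fun lam : ℝ => lam ^ α * ∫ t, Real.exp (-lam * t) ∂μ)
      atTop (nhds A)) {c : ℝ} (hc : 0 < c) :
    Tendsto (fun l : ℝ => l ^ α * ∫ t, Real.exp (-(c * l) * t) ∂μ)
      atTop (nhds (A * c ^ (-α))) := by
  have h1 : Tendsto (fun l : ℝ => c ^ (-α) *
      ((c * l) ^ α * ∫ t, Real.exp (-(c * l) * t) ∂μ)) atTop (nhds (c ^ (-α) * A)) := by
    exact (hLap.comp (tendsto_id.const_mul_atTop hc)).const_mul _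
  rw [mul_comm A]
  refine h1.congr' ?_
  filter_upwards [eventually_gt_atTop 0] with l hl
  rw [Real.mul_rpow hc.le hl.le, Real.rpow_neg hc.le]
  field_simp

noncomputable def Gramp (a d x : ℝ) : ℝ := max 0 (min 1 ((a + Real.log x) / d)) * x⁻¹

lemma Gramp_exp (a d s : ℝ) :
    Gramp a d (Real.exp (-s)) * Real.exp (-s) = max 0 (min 1 ((a - s) / d)) := by
  unfold Gramp
  rw [Real.log_exp, mul_assoc, inv_mul_cancel₀ (Real.exp_ne_zero _), mul_one]
  ring_nf

lemma Gramp_zero {a d x : ℝ} (hx : 0 ≤ x) (hxa : x < Real.exp (-a)) (hd : 0 < d) :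
    Gramp a d x = 0 := by
  rcases eq_or_lt_of_le hx with h | h
  · unfold Gramp; rw [← h, inv_zero, mul_zero]
  · have hlog : Real.log x < -a := (Real.log_lt_iff_lt_exp h).2 hxa
    have h1 : (a + Real.log x) / d < 0 := div_neg_of_neg_of_pos (by linarith) hd
    unfold Gramp
    rw [min_eq_right (by linarith), max_eq_left (by linarith), zero_mul]

lemma Gramp_continuousOn {a d : ℝ} (ha : 0 < a) (hd : 0 < d) :
    ContinuousOn (Gramp a d) (Set.Icc 0 1) := by
  intro x hx
  rcases eq_or_lt_of_le hx.1 with h | h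
  · -- x = 0
    have heq : ∀ y ∈ Set.Iio (Real.exp (-a)) ∩ Set.Icc 0 1, Gramp a d y = 0 := fun y hy =>
      Gramp_zero hy.2.1 hy.1 hd
    have hmem : Set.Iio (Real.exp (-a)) ∈ nhdsWithin x (Set.Icc 0 1) :=
      nhdsWithin_le_nhds (Iio_mem_nhds (by rw [← h]; exact Real.exp_pos _))
    refine ContinuousWithinAt.congr_of_eventuallyEq (continuousWithinAt_const (b := (0:ℝ))) ?_ ?_
    · filter_upwards [hmem, self_mem_nhdsWithin] with y hy hy2
      exact heq y ⟨hy, hy2⟩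
    · exact Gramp_zero hx.1 (by rw [← h]; exact Real.exp_pos _) hd
  · -- 0 < x
    refine ContinuousAt.continuousWithinAt ?_
    have h1 : ContinuousAt (fun y : ℝ => (a + Real.log y) / d) x :=
      (continuousAt_const.add (Real.continuousAt_log h.ne')).div_const d
    exact ((continuousAt_const.max (continuousAt_const.min h1)).mul
      (continuousAt_inv₀ h.ne'))

lemma kt_measure_finite (μ : Measure ℝ)
    (hint : ∀ lam : ℝ, 0 < lam → Integrable (fun t => Real.exp (-lam * t)) μ)
    (s : ℝ) : μ (Set.Icc 0 s) < ⊤ := by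
  refine lt_of_le_of_lt (measure_mono (fun t ht => ?_))
    ((hint 1 one_pos).measure_ge_lt_top (Real.exp_pos (-s)))
  show Real.exp (-s) ≤ Real.exp (-1 * t)
  exact Real.exp_le_exp.2 (by simpa using ht.2)

lemma kt_indicator_integrable (μ : Measure ℝ)
    (hint : ∀ lam : ℝ, 0 < lam → Integrable (fun t => Real.exp (-lam * t)) μ)
    (s : ℝ) : Integrable ((Set.Icc 0 s).indicator (fun _ => (1:ℝ))) μ := by
  rw [integrable_indicator_iff measurableSet_Icc]
  exact integrableOn_const (kt_measure_finite μ hint s).ne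

lemma kt_indicator_integral (μ : Measure ℝ) (s : ℝ) :
    ∫ t, (Set.Icc 0 s).indicator (fun _ => (1:ℝ)) t ∂μ = (μ (Set.Icc 0 s)).toReal := by
  rw [MeasureTheory.integral_indicator_const (1:ℝ) measurableSet_Icc, smul_eq_mul, mul_one]
  rfl

lemma kt_rpow_Ioc_integrable {α : ℝ} (hα : 0 < α) (c : ℝ) :
    IntegrableOn (fun t : ℝ => t ^ (α - 1)) (Set.Ioc 0 c) := by
  rcases le_or_gt c 0 with h | h
  · rw [Set.Ioc_eq_empty (by simpa using h)]; simp
  · have := intervalIntegral.intervalIntegrable_rpow' (a := 0) (b := c)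
      (show (-1:ℝ) < α - 1 by linarith)
    rw [intervalIntegrable_iff, Set.uIoc_of_le h.le] at this
    exact this

lemma kt_rpow_Ioc_integral {α : ℝ} (hα : 0 < α) {c : ℝ} (hc : 0 ≤ c) :
    ∫ t in Set.Ioc 0 c, t ^ (α - 1) = c ^ α / α := by
  rw [← intervalIntegral.integral_of_le hc,
    integral_rpow (Or.inl (show (-1:ℝ) < α - 1 by linarith))]
  rw [Real.zero_rpow (by linarith : α - 1 + 1 ≠ 0)]
  ring_nf

lemma kt_indicator_rpow_integrableOn {α : ℝ} (hα : 0 < α) (c : ℝ) :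
    IntegrableOn (fun t : ℝ =>
      (Set.Icc 0 c).indicator (fun u : ℝ => u ^ (α - 1)) t) (Set.Ioi 0) := by
  have : IntegrableOn (fun u : ℝ => u ^ (α - 1)) (Set.Icc 0 c)
      (MeasureTheory.volume.restrict (Set.Ioi 0)) := by
    unfold IntegrableOn
    rw [Measure.restrict_restrict measurableSet_Icc]
    exact (kt_rpow_Ioc_integrable hα c).mono_set (fun x hx => ⟨hx.2, hx.1.2⟩)
  exact (integrable_indicator_iff measurableSet_Icc).2 this

lemma kt_indicator_rpow_integral {α : ℝ} (hα : 0 < α) {c : ℝ} (hc : 0 ≤ c) :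
    ∫ t in Set.Ioi 0, (Set.Icc 0 c).indicator (fun u : ℝ => u ^ (α - 1)) t
      = c ^ α / α := by
  rw [MeasureTheory.setIntegral_indicator measurableSet_Icc]
  rw [show Set.Ioi (0:ℝ) ∩ Set.Icc 0 c = Set.Ioc 0 c by
    ext x; simp only [Set.mem_inter_iff, Set.mem_Ioi, Set.mem_Icc, Set.mem_Ioc]
    constructor
    · rintro ⟨h1, _, h3⟩; exact ⟨h1, h3⟩
    · rintro ⟨h1, h2⟩; exact ⟨h1, le_of_lt h1, h2⟩]
  exact kt_rpow_Ioc_integral hα hc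
lemma kt_key (p : Polynomial ℝ) (x : ℝ) :
    p.eval x * x = ∑ n ∈ Finset.range (p.natDegree + 1), p.coeff n * x ^ (n + 1) := by
  rw [Polynomial.eval_eq_sum_range, Finset.sum_mul]
  exact Finset.sum_congr rfl fun n _ => by rw [mul_assoc, ← pow_succ]

lemma kt_expkey (s : ℝ) (n : ℕ) :
    Real.exp s ^ (n + 1) = Real.exp ((((n:ℝ)+1)) * s) := by
  rw [← Real.exp_nat_mul]; norm_num

lemma kt_poly_integrableOn {α : ℝ} (hα : 0 < α) (p : Polynomial ℝ) :
    IntegrableOn (fun t : ℝ => p.eval (Real.exp (-t)) * Real.exp (-t) * t ^ (α - 1))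
      (Set.Ioi 0) := by
  rw [show (fun t : ℝ => p.eval (Real.exp (-t)) * Real.exp (-t) * t ^ (α - 1)) =
      (fun t : ℝ => ∑ n ∈ Finset.range (p.natDegree + 1),
        p.coeff n * (t ^ (α - 1) * Real.exp (-((((n:ℝ)+1)) * t)))) from funext fun t => by
      rw [kt_key, Finset.sum_mul]
      exact Finset.sum_congr rfl fun n _ => by
        rw [show (-t : ℝ) = -1 * t by ring, kt_expkey]; ring_nf]
  exact integrable_finset_sum _ fun n _ =>
    (kt_integrableOn_rpow_exp hα (by positivity : (0:ℝ) < (n:ℝ)+1)).const_mul _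

lemma kt_T_upper {α d e : ℝ} (hα : 0 < α) (hd : 0 < d) (he : 0 < e) (p : Polynomial ℝ)
    (happrox : ∀ x ∈ Set.Icc (0:ℝ) 1, |p.eval x - Gramp (1+d) d x| ≤ e) :
    ∫ t in Set.Ioi 0, p.eval (Real.exp (-t)) * Real.exp (-t) * t ^ (α - 1)
      ≤ (1+d) ^ α / α + e * Real.Gamma α := by
  have hind := kt_indicator_rpow_integrableOn hα (1+d)
  have hexp := (kt_integrableOn_rpow_exp hα one_pos).const_mul e
  have hle : ∫ t in Set.Ioi 0, p.eval (Real.exp (-t)) * Real.exp (-t) * t ^ (α - 1)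
      ≤ ∫ t in Set.Ioi 0, ((Set.Icc 0 (1+d)).indicator (fun u : ℝ => u ^ (α - 1)) t
        + e * (t ^ (α - 1) * Real.exp (-(1 * t)))) := by
    refine setIntegral_mono_on (kt_poly_integrableOn hα p) (hind.add hexp)
      measurableSet_Ioi (fun t ht => ?_)
    have ht0 : (0:ℝ) < t := ht
    have hx0 : (0:ℝ) < Real.exp (-t) := Real.exp_pos _
    have hx1 : Real.exp (-t) ≤ 1 := by
      rw [show (1:ℝ) = Real.exp 0 by rw [Real.exp_zero]]
      exact Real.exp_le_exp.2 (by linarith)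
    have hap : p.eval (Real.exp (-t)) ≤ Gramp (1+d) d (Real.exp (-t)) + e := by
      have := (abs_le.1 (happrox _ ⟨hx0.le, hx1⟩)).2; linarith
    have hGx := Gramp_exp (1+d) d t
    have htp : (0:ℝ) ≤ t ^ (α - 1) := Real.rpow_nonneg ht0.le _
    have hmax : max 0 (min 1 ((1+d-t)/d)) * t ^ (α-1)
        ≤ (Set.Icc 0 (1+d)).indicator (fun u : ℝ => u ^ (α - 1)) t := by
      by_cases hmem : t ∈ Set.Icc (0:ℝ) (1+d)
      · rw [Set.indicator_of_mem hmem]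
        have h1 : max 0 (min 1 ((1+d-t)/d)) ≤ 1 := max_le zero_le_one (min_le_left _ _)
        nlinarith
      · rw [Set.indicator_of_notMem hmem]
        have ht2 : 1 + d < t := by
          simp only [Set.mem_Icc, not_and, not_le] at hmem
          exact hmem ht0.le
        have hneg : (1+d-t)/d ≤ 0 := div_nonpos_of_nonpos_of_nonneg (by linarith) hd.le
        rw [min_eq_right (le_trans hneg zero_le_one), max_eq_left hneg, zero_mul]
    calc p.eval (Real.exp (-t)) * Real.exp (-t) * t ^ (α - 1)
        ≤ (Gramp (1+d) d (Real.exp (-t)) + e) * Real.exp (-t) * t ^ (α - 1) := by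
          exact mul_le_mul_of_nonneg_right
            (mul_le_mul_of_nonneg_right hap hx0.le) htp
      _ = (Gramp (1+d) d (Real.exp (-t)) * Real.exp (-t)) * t ^ (α - 1)
            + e * (t ^ (α - 1) * Real.exp (-(1*t))) := by ring_nf
      _ ≤ (Set.Icc 0 (1+d)).indicator (fun u : ℝ => u ^ (α - 1)) t
            + e * (t ^ (α - 1) * Real.exp (-(1*t))) := by
          rw [hGx]; exact add_le_add hmax le_rfl
  refine le_trans hle (le_of_eq ?_)
  rw [integral_add hind hexp, MeasureTheory.integral_const_mul,
    kt_indicator_rpow_integral hα (by linarith : (0:ℝ) ≤ 1+d),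
    integral_rpow_mul_exp_neg_mul_Ioi hα one_pos]
  norm_num

lemma kt_T_lower {α d e : ℝ} (hα : 0 < α) (hd : 0 < d) (hd1 : d ≤ 1) (he : 0 < e)
    (p : Polynomial ℝ)
    (happrox : ∀ x ∈ Set.Icc (0:ℝ) 1, |p.eval x - Gramp 1 d x| ≤ e) :
    (1-d) ^ α / α - e * Real.Gamma α
      ≤ ∫ t in Set.Ioi 0, p.eval (Real.exp (-t)) * Real.exp (-t) * t ^ (α - 1) := by
  have hind := kt_indicator_rpow_integrableOn hα (1-d)
  have hexp := (kt_integrableOn_rpow_exp hα one_pos).const_mul e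
  have hle : ∫ t in Set.Ioi 0, ((Set.Icc 0 (1-d)).indicator (fun u : ℝ => u ^ (α - 1)) t
        - e * (t ^ (α - 1) * Real.exp (-(1 * t))))
      ≤ ∫ t in Set.Ioi 0, p.eval (Real.exp (-t)) * Real.exp (-t) * t ^ (α - 1) := by
    refine setIntegral_mono_on (hind.sub hexp) (kt_poly_integrableOn hα p)
      measurableSet_Ioi (fun t ht => ?_)
    have ht0 : (0:ℝ) < t := ht
    have hx0 : (0:ℝ) < Real.exp (-t) := Real.exp_pos _
    have hx1 : Real.exp (-t) ≤ 1 := by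
      rw [show (1:ℝ) = Real.exp 0 by rw [Real.exp_zero]]
      exact Real.exp_le_exp.2 (by linarith)
    have hap : Gramp 1 d (Real.exp (-t)) - e ≤ p.eval (Real.exp (-t)) := by
      have := (abs_le.1 (happrox _ ⟨hx0.le, hx1⟩)).1; linarith
    have hGx := Gramp_exp 1 d t
    have htp : (0:ℝ) ≤ t ^ (α - 1) := Real.rpow_nonneg ht0.le _
    have hmax : (Set.Icc 0 (1-d)).indicator (fun u : ℝ => u ^ (α - 1)) t
        ≤ max 0 (min 1 ((1-t)/d)) * t ^ (α-1) := by
      by_cases hmem : t ∈ Set.Icc (0:ℝ) (1-d)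
      · rw [Set.indicator_of_mem hmem]
        have h1 : (1:ℝ) ≤ (1-t)/d := (le_div_iff₀ hd).2 (by linarith [hmem.2])
        rw [min_eq_left h1, max_eq_right zero_le_one, one_mul]
      · rw [Set.indicator_of_notMem hmem]
        positivity
    calc (Set.Icc 0 (1-d)).indicator (fun u : ℝ => u ^ (α - 1)) t
          - e * (t ^ (α - 1) * Real.exp (-(1*t)))
        ≤ max 0 (min 1 ((1-t)/d)) * t ^ (α-1)
          - e * (t ^ (α - 1) * Real.exp (-(1*t))) := by linarith
      _ = (Gramp 1 d (Real.exp (-t)) * Real.exp (-t)) * t ^ (α - 1)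
          - e * (t ^ (α - 1) * Real.exp (-(1*t))) := by rw [hGx]
      _ = (Gramp 1 d (Real.exp (-t)) - e) * Real.exp (-t) * t ^ (α - 1) := by ring_nf
      _ ≤ p.eval (Real.exp (-t)) * Real.exp (-t) * t ^ (α - 1) := by
          exact mul_le_mul_of_nonneg_right
            (mul_le_mul_of_nonneg_right hap hx0.le) htp
  refine le_trans (le_of_eq ?_) hle
  rw [integral_sub hind hexp, MeasureTheory.integral_const_mul,
    kt_indicator_rpow_integral hα (by linarith : (0:ℝ) ≤ 1-d),
    integral_rpow_mul_exp_neg_mul_Ioi hα one_pos]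
  norm_num
lemma Gramp_nonneg {a d x : ℝ} (hx : 0 ≤ x) : 0 ≤ Gramp a d x :=
  mul_nonneg (le_max_left _ _) (inv_nonneg.2 hx)

lemma kt_poly_integrable (μ : Measure ℝ)
    (hint : ∀ lam : ℝ, 0 < lam → Integrable (fun t => Real.exp (-lam * t)) μ)
    {l : ℝ} (hl : 0 < l) (p : Polynomial ℝ) :
    Integrable (fun t : ℝ => p.eval (Real.exp (-l * t)) * Real.exp (-l * t)) μ := by
  rw [show (fun t : ℝ => p.eval (Real.exp (-l * t)) * Real.exp (-l * t)) =
      (fun t : ℝ => ∑ n ∈ Finset.range (p.natDegree + 1),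
        p.coeff n * Real.exp (-((((n:ℝ)+1)) * l) * t)) from funext fun t => by
      rw [kt_key]
      exact Finset.sum_congr rfl fun n _ => by rw [kt_expkey]; ring_nf]
  exact integrable_finset_sum _ fun n _ => ((hint _ (by positivity)).const_mul _)

lemma kt_shift_integrable (μ : Measure ℝ)
    (hint : ∀ lam : ℝ, 0 < lam → Integrable (fun t => Real.exp (-lam * t)) μ)
    {l : ℝ} (hl : 0 < l) (p : Polynomial ℝ) (e : ℝ) :
    Integrable (fun t : ℝ => (p.eval (Real.exp (-l * t)) + e) * Real.exp (-l * t)) μ := by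
  rw [show (fun t : ℝ => (p.eval (Real.exp (-l * t)) + e) * Real.exp (-l * t)) =
      (fun t : ℝ => p.eval (Real.exp (-l * t)) * Real.exp (-l * t)
        + e * Real.exp (-l * t)) from funext fun t => by ring]
  exact (kt_poly_integrable μ hint hl p).add ((hint l hl).const_mul e)

lemma kt_mu_upper (μ : Measure ℝ) (hsupp : μ (Set.Iio 0) = 0)
    (hint : ∀ lam : ℝ, 0 < lam → Integrable (fun t => Real.exp (-lam * t)) μ)
    {l d e : ℝ} (hl : 0 < l) (hd : 0 < d) (he : 0 < e) (p : Polynomial ℝ)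
    (happrox : ∀ x ∈ Set.Icc (0:ℝ) 1, |p.eval x - Gramp (1+d) d x| ≤ e) :
    (μ (Set.Icc 0 l⁻¹)).toReal
      ≤ ∫ t, (p.eval (Real.exp (-l * t)) + e) * Real.exp (-l * t) ∂μ := by
  rw [← kt_indicator_integral μ l⁻¹]
  refine integral_mono_ae (kt_indicator_integrable μ hint _)
    (kt_shift_integrable μ hint hl p e) ?_
  have h0 : ∀ᵐ t ∂μ, (0:ℝ) ≤ t := by
    rw [ae_iff]
    convert hsupp using 2
    ext t; simp [not_le]
  filter_upwards [h0] with t ht0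
  have hlt : (0:ℝ) ≤ l * t := by positivity
  have hx0 : (0:ℝ) < Real.exp (-l * t) := Real.exp_pos _
  have hx1 : Real.exp (-l * t) ≤ 1 := by
    rw [show (1:ℝ) = Real.exp 0 by rw [Real.exp_zero]]
    exact Real.exp_le_exp.2 (by linarith)
  have hap : Gramp (1+d) d (Real.exp (-l * t)) ≤ p.eval (Real.exp (-l * t)) + e := by
    have := (abs_le.1 (happrox _ ⟨hx0.le, hx1⟩)).1; linarith
  by_cases hmem : t ∈ Set.Icc (0:ℝ) l⁻¹
  · rw [Set.indicator_of_mem hmem]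
    have hlt1 : l * t ≤ 1 := by
      have := mul_le_mul_of_nonneg_left hmem.2 hl.le
      rwa [mul_inv_cancel₀ hl.ne'] at this
    have hG := Gramp_exp (1+d) d (l * t)
    rw [show -(l*t) = -l*t by ring] at hG
    have h1 : (1:ℝ) ≤ (1+d-l*t)/d := (le_div_iff₀ hd).2 (by linarith)
    rw [min_eq_left h1, max_eq_right zero_le_one] at hG
    calc (1:ℝ) = Gramp (1+d) d (Real.exp (-l*t)) * Real.exp (-l*t) := hG.symm
      _ ≤ (p.eval (Real.exp (-l * t)) + e) * Real.exp (-l * t) :=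
          mul_le_mul_of_nonneg_right hap hx0.le
  · rw [Set.indicator_of_notMem hmem]
    exact mul_nonneg (le_trans (Gramp_nonneg hx0.le) hap) hx0.le

lemma kt_mu_lower (μ : Measure ℝ) (hsupp : μ (Set.Iio 0) = 0)
    (hint : ∀ lam : ℝ, 0 < lam → Integrable (fun t => Real.exp (-lam * t)) μ)
    {l d e : ℝ} (hl : 0 < l) (hd : 0 < d) (he : 0 < e) (p : Polynomial ℝ)
    (happrox : ∀ x ∈ Set.Icc (0:ℝ) 1, |p.eval x - Gramp 1 d x| ≤ e) :
    ∫ t, (p.eval (Real.exp (-l * t)) + (-e)) * Real.exp (-l * t) ∂μ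
      ≤ (μ (Set.Icc 0 l⁻¹)).toReal := by
  rw [← kt_indicator_integral μ l⁻¹]
  refine integral_mono_ae (kt_shift_integrable μ hint hl p (-e))
    (kt_indicator_integrable μ hint _) ?_
  have h0 : ∀ᵐ t ∂μ, (0:ℝ) ≤ t := by
    rw [ae_iff]
    convert hsupp using 2
    ext t; simp [not_le]
  filter_upwards [h0] with t ht0
  have hlt : (0:ℝ) ≤ l * t := by positivity
  have hx0 : (0:ℝ) < Real.exp (-l * t) := Real.exp_pos _
  have hx1 : Real.exp (-l * t) ≤ 1 := by
    rw [show (1:ℝ) = Real.exp 0 by rw [Real.exp_zero]]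
    exact Real.exp_le_exp.2 (by linarith)
  have hap : p.eval (Real.exp (-l * t)) + (-e) ≤ Gramp 1 d (Real.exp (-l * t)) := by
    have := (abs_le.1 (happrox _ ⟨hx0.le, hx1⟩)).2; linarith
  have hG := Gramp_exp 1 d (l * t)
  rw [show -(l*t) = -l*t by ring] at hG
  have hstep : (p.eval (Real.exp (-l * t)) + (-e)) * Real.exp (-l * t)
      ≤ max 0 (min 1 ((1 - l*t)/d)) := by
    rw [← hG]
    exact mul_le_mul_of_nonneg_right hap hx0.le
  by_cases hmem : t ∈ Set.Icc (0:ℝ) l⁻¹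
  · rw [Set.indicator_of_mem hmem]
    exact le_trans hstep (max_le zero_le_one (min_le_left _ _))
  · rw [Set.indicator_of_notMem hmem]
    have ht2 : l⁻¹ < t := by
      simp only [Set.mem_Icc, not_and, not_le] at hmem
      exact hmem ht0
    have hlt1 : 1 < l * t := by
      have := mul_lt_mul_of_pos_left ht2 hl
      rwa [mul_inv_cancel₀ hl.ne'] at this
    have hneg : (1 - l*t)/d ≤ 0 := div_nonpos_of_nonpos_of_nonneg (by linarith) hd.le
    refine le_trans hstep ?_
    rw [min_eq_right (le_trans hneg zero_le_one), max_eq_left hneg]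
lemma kt_poly_limit (μ : Measure ℝ)
    (hint : ∀ lam : ℝ, 0 < lam → Integrable (fun t => Real.exp (-lam * t)) μ)
    (α A : ℝ) (hα : 0 < α)
    (hLap : Tendsto (fun lam : ℝ => lam ^ α * ∫ t, Real.exp (-lam * t) ∂μ)
      atTop (nhds A)) (p : Polynomial ℝ) :
    Tendsto (fun l : ℝ => l ^ α * ∫ t, p.eval (Real.exp (-l * t)) * Real.exp (-l * t) ∂μ)
      atTop (nhds (A / Real.Gamma α *
        ∫ t in Set.Ioi 0, p.eval (Real.exp (-t)) * Real.exp (-t) * t ^ (α - 1))) := by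
  set N := p.natDegree + 1 with hN
  have hΓ : 0 < Real.Gamma α := Real.Gamma_pos_of_pos hα
  have hc : ∀ n : ℕ, (0:ℝ) < (n:ℝ) + 1 := fun n => by positivity
  have key : ∀ x : ℝ, p.eval x * x = ∑ n ∈ Finset.range N, p.coeff n * x ^ (n + 1) := by
    intro x
    rw [Polynomial.eval_eq_sum_range, Finset.sum_mul]
    exact Finset.sum_congr rfl fun n _ => by rw [mul_assoc, ← pow_succ]
  have expkey : ∀ (s : ℝ) (n : ℕ),
      Real.exp s ^ (n + 1) = Real.exp ((((n:ℝ)+1)) * s) := by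
    intro s n
    rw [← Real.exp_nat_mul]
    norm_num
  -- RHS computation
  have hRHS : A / Real.Gamma α *
      (∫ t in Set.Ioi 0, p.eval (Real.exp (-t)) * Real.exp (-t) * t ^ (α - 1)) =
      ∑ n ∈ Finset.range N, p.coeff n * (A * ((n:ℝ)+1) ^ (-α)) := by
    have h1 : (∫ t in Set.Ioi 0, p.eval (Real.exp (-t)) * Real.exp (-t) * t ^ (α - 1)) =
        ∑ n ∈ Finset.range N, p.coeff n * ((1/(((n:ℝ)+1))) ^ α * Real.Gamma α) := by
      rw [show (fun t : ℝ => p.eval (Real.exp (-t)) * Real.exp (-t) * t ^ (α - 1)) =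
          (fun t : ℝ => ∑ n ∈ Finset.range N,
            p.coeff n * (t ^ (α - 1) * Real.exp (-((((n:ℝ)+1)) * t)))) from funext fun t => by
          rw [key, Finset.sum_mul]
          exact Finset.sum_congr rfl fun n _ => by
            rw [expkey, mul_comm ((n:ℝ)+1) (-t)]; ring_nf]
      rw [integral_finset_sum]
      · refine Finset.sum_congr rfl fun n _ => ?_
        rw [MeasureTheory.integral_const_mul, integral_rpow_mul_exp_neg_mul_Ioi hα (hc n)]
      · intro n _
        exact (kt_integrableOn_rpow_exp hα (hc n)).const_mul _
    rw [h1, Finset.mul_sum]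
    refine Finset.sum_congr rfl fun n _ => ?_
    rw [one_div, Real.inv_rpow (hc n).le, ← Real.rpow_neg (hc n).le]
    field_simp
  rw [hRHS]
  -- LHS
  have hL : Tendsto (fun l : ℝ => ∑ n ∈ Finset.range N,
      p.coeff n * (l ^ α * ∫ t, Real.exp (-((((n:ℝ)+1)) * l) * t) ∂μ)) atTop
      (nhds (∑ n ∈ Finset.range N, p.coeff n * (A * ((n:ℝ)+1) ^ (-α)))) := by
    exact tendsto_finset_sum _ fun n _ =>
      (kt_scaled_limit μ α A hLap (hc n)).const_mul _
  refine hL.congr' ?_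
  filter_upwards [eventually_gt_atTop (0:ℝ)] with l hl
  have hInt : ∫ t, p.eval (Real.exp (-l * t)) * Real.exp (-l * t) ∂μ =
      ∑ n ∈ Finset.range N, p.coeff n * ∫ t, Real.exp (-((((n:ℝ)+1)) * l) * t) ∂μ := by
    rw [show (fun t : ℝ => p.eval (Real.exp (-l * t)) * Real.exp (-l * t)) =
        (fun t : ℝ => ∑ n ∈ Finset.range N,
          p.coeff n * Real.exp (-((((n:ℝ)+1)) * l) * t)) from funext fun t => by
        rw [key]
        exact Finset.sum_congr rfl fun n _ => by
          rw [expkey]; ring_nf]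
    rw [integral_finset_sum]
    · exact Finset.sum_congr rfl fun n _ => MeasureTheory.integral_const_mul _ _
    · intro n _
      exact ((hint _ (by positivity)).const_mul _)
  rw [hInt, Finset.mul_sum]
  exact Finset.sum_congr rfl fun n _ => by ring

theorem stmt_15 (μ : Measure ℝ) (hsupp : μ (Set.Iio 0) = 0)
    (hint : ∀ lam : ℝ, 0 < lam → Integrable (fun t => Real.exp (-lam * t)) μ)
    (α A : ℝ) (hα : 0 < α) (hA : 0 < A)
    (hLap : Tendsto (fun lam : ℝ => lam ^ α * ∫ t, Real.exp (-lam * t) ∂μ)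
      atTop (nhds A)) :
    Tendsto (fun t : ℝ => t ^ (-α) * (μ (Set.Icc 0 t)).toReal)
      (nhdsWithin 0 (Set.Ioi 0)) (nhds (A / Real.Gamma (α + 1))) := by
  have hΓ : 0 < Real.Gamma α := Real.Gamma_pos_of_pos hα
  have hΓ1 : Real.Gamma (α + 1) = α * Real.Gamma α := by
    rw [Real.Gamma_add_one hα.ne']
  have hΓ1pos : 0 < Real.Gamma (α + 1) := by rw [hΓ1]; positivity
  set L := A / Real.Gamma (α + 1) with hL
  have main : Tendsto (fun l : ℝ => l ^ α * (μ (Set.Icc 0 l⁻¹)).toReal)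
      atTop (nhds L) := by
    rw [Metric.tendsto_nhds]
    intro ε hε
    -- choose d
    have hcont : ContinuousAt (fun x : ℝ => A * x ^ α / Real.Gamma (α + 1)) 1 := by
      have h1 : ContinuousAt (fun x : ℝ => x ^ α) 1 :=
        Real.continuousAt_rpow_const 1 α (Or.inl one_ne_zero)
      exact (continuousAt_const.mul h1).div_const _
    rw [Metric.continuousAt_iff] at hcont
    obtain ⟨δ₀, hδ₀, hδ⟩ := hcont (ε / 4) (by positivity)
    set d := min (δ₀ / 2) (1 / 2) with hdd
    have hd : 0 < d := lt_min (by positivity) (by norm_num)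
    have hd1 : d ≤ 1 := le_trans (min_le_right _ _) (by norm_num)
    have hdist : ∀ s : ℝ, |s - 1| = d → A * s ^ α / Real.Gamma (α + 1) ∈
        Set.Ioo (L - ε / 4) (L + ε / 4) := by
      intro s hs
      have h2 : dist s 1 < δ₀ := by
        rw [Real.dist_eq, hs]
        exact lt_of_le_of_lt (min_le_left _ _) (by linarith)
      have h3 := hδ h2
      rw [Real.dist_eq] at h3
      have h4 : A * (1:ℝ) ^ α / Real.Gamma (α + 1) = L := by
        rw [Real.one_rpow, mul_one]
      rw [h4] at h3
      have h5 := abs_sub_lt_iff.1 h3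
      exact ⟨by linarith [h5.2], by linarith [h5.1]⟩
    have hup := hdist (1 + d) (by rw [show (1 + d - 1 : ℝ) = d by ring]; exact abs_of_pos hd)
    have hlo := hdist (1 - d) (by rw [show (1 - d - 1 : ℝ) = -d by ring]; exact abs_neg d ▸ abs_of_pos hd)
    set e := ε / (16 * A) with hee
    have he : 0 < e := by positivity
    have heA : e * A = ε / 16 := by rw [hee]; field_simp
    -- polynomials
    obtain ⟨p₂, hp₂⟩ := exists_polynomial_near_of_continuousOn 0 1 (Gramp (1 + d) d)
      (Gramp_continuousOn (by linarith) hd) e he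
    obtain ⟨p₁, hp₁⟩ := exists_polynomial_near_of_continuousOn 0 1 (Gramp 1 d)
      (Gramp_continuousOn one_pos hd) e he
    have hap₂ : ∀ x ∈ Set.Icc (0:ℝ) 1, |p₂.eval x - Gramp (1 + d) d x| ≤ e :=
      fun x hx => (hp₂ x hx).le
    have hap₁ : ∀ x ∈ Set.Icc (0:ℝ) 1, |p₁.eval x - Gramp 1 d x| ≤ e :=
      fun x hx => (hp₁ x hx).le
    -- upper and lower comparison functions
    set T₂ := ∫ t in Set.Ioi 0, p₂.eval (Real.exp (-t)) * Real.exp (-t) * t ^ (α - 1)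
      with hT₂def
    set T₁ := ∫ t in Set.Ioi 0, p₁.eval (Real.exp (-t)) * Real.exp (-t) * t ^ (α - 1)
      with hT₁def
    set U : ℝ → ℝ := fun l => l ^ α * ∫ t, p₂.eval (Real.exp (-l * t)) * Real.exp (-l * t) ∂μ
      + e * (l ^ α * ∫ t, Real.exp (-l * t) ∂μ) with hUdef
    set V : ℝ → ℝ := fun l => l ^ α * ∫ t, p₁.eval (Real.exp (-l * t)) * Real.exp (-l * t) ∂μ
      + (-e) * (l ^ α * ∫ t, Real.exp (-l * t) ∂μ) with hVdef
    have hU : Tendsto U atTop (nhds (A / Real.Gamma α * T₂ + e * A)) :=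
      (kt_poly_limit μ hint α A hα hLap p₂).add (hLap.const_mul e)
    have hV : Tendsto V atTop (nhds (A / Real.Gamma α * T₁ + (-e) * A)) :=
      (kt_poly_limit μ hint α A hα hLap p₁).add (hLap.const_mul (-e))
    have hAΓ : (0:ℝ) ≤ A / Real.Gamma α := by positivity
    have hUlt : A / Real.Gamma α * T₂ + e * A < L + ε := by
      have h1 := kt_T_upper hα hd he p₂ hap₂
      have h2 : A / Real.Gamma α * T₂ ≤ A / Real.Gamma α * ((1 + d) ^ α / α + e * Real.Gamma α) :=
        mul_le_mul_of_nonneg_left h1 hAΓ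
      have h3 : A / Real.Gamma α * ((1 + d) ^ α / α + e * Real.Gamma α)
          = A * (1 + d) ^ α / Real.Gamma (α + 1) + e * A := by
        rw [hΓ1]; field_simp
      have h4 := hup.2
      linarith [heA]
    have hVgt : L - ε < A / Real.Gamma α * T₁ + (-e) * A := by
      have h1 := kt_T_lower hα hd hd1 he p₁ hap₁
      have h2 : A / Real.Gamma α * ((1 - d) ^ α / α - e * Real.Gamma α) ≤ A / Real.Gamma α * T₁ :=
        mul_le_mul_of_nonneg_left h1 hAΓ
      have h3 : A / Real.Gamma α * ((1 - d) ^ α / α - e * Real.Gamma α)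
          = A * (1 - d) ^ α / Real.Gamma (α + 1) - e * A := by
        rw [hΓ1]; field_simp
      have h4 := hlo.1
      linarith [heA]
    have hUev : ∀ᶠ l in atTop, l ^ α * (μ (Set.Icc 0 l⁻¹)).toReal ≤ U l := by
      filter_upwards [eventually_gt_atTop (0:ℝ)] with l hl
      have hsplit : ∫ t, (p₂.eval (Real.exp (-l * t)) + e) * Real.exp (-l * t) ∂μ
          = (∫ t, p₂.eval (Real.exp (-l * t)) * Real.exp (-l * t) ∂μ)
            + e * ∫ t, Real.exp (-l * t) ∂μ := by
        rw [show (fun t : ℝ => (p₂.eval (Real.exp (-l * t)) + e) * Real.exp (-l * t))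
            = fun t : ℝ => p₂.eval (Real.exp (-l * t)) * Real.exp (-l * t)
              + e * Real.exp (-l * t) from funext fun t => by ring,
          integral_add (kt_poly_integrable μ hint hl p₂) ((hint l hl).const_mul e),
          MeasureTheory.integral_const_mul]
      calc l ^ α * (μ (Set.Icc 0 l⁻¹)).toReal
          ≤ l ^ α * ∫ t, (p₂.eval (Real.exp (-l * t)) + e) * Real.exp (-l * t) ∂μ :=
            mul_le_mul_of_nonneg_left (kt_mu_upper μ hsupp hint hl hd he p₂ hap₂)
              (Real.rpow_nonneg hl.le α)
        _ = U l := by rw [hsplit, hUdef]; ring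
    have hVev : ∀ᶠ l in atTop, V l ≤ l ^ α * (μ (Set.Icc 0 l⁻¹)).toReal := by
      filter_upwards [eventually_gt_atTop (0:ℝ)] with l hl
      have hsplit : ∫ t, (p₁.eval (Real.exp (-l * t)) + (-e)) * Real.exp (-l * t) ∂μ
          = (∫ t, p₁.eval (Real.exp (-l * t)) * Real.exp (-l * t) ∂μ)
            + (-e) * ∫ t, Real.exp (-l * t) ∂μ := by
        rw [show (fun t : ℝ => (p₁.eval (Real.exp (-l * t)) + (-e)) * Real.exp (-l * t))
            = fun t : ℝ => p₁.eval (Real.exp (-l * t)) * Real.exp (-l * t)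
              + (-e) * Real.exp (-l * t) from funext fun t => by ring,
          integral_add (kt_poly_integrable μ hint hl p₁) ((hint l hl).const_mul (-e)),
          MeasureTheory.integral_const_mul]
      calc V l = l ^ α * ∫ t, (p₁.eval (Real.exp (-l * t)) + (-e)) * Real.exp (-l * t) ∂μ := by
            rw [hsplit, hVdef]; ring
        _ ≤ l ^ α * (μ (Set.Icc 0 l⁻¹)).toReal :=
            mul_le_mul_of_nonneg_left (kt_mu_lower μ hsupp hint hl hd he p₁ hap₁)
              (Real.rpow_nonneg hl.le α)
    filter_upwards [hUev, hVev, hU.eventually_lt_const hUlt, hV.eventually_const_lt hVgt]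
      with l h1 h2 h3 h4
    clear_value L d e U V T₁ T₂
    rw [Real.dist_eq, abs_sub_lt_iff]
    constructor <;> linarith
  have hcomp : Tendsto ((fun l : ℝ => l ^ α * (μ (Set.Icc 0 l⁻¹)).toReal) ∘ fun t : ℝ => t⁻¹)
      (nhdsWithin 0 (Set.Ioi 0)) (nhds L) := main.comp tendsto_inv_nhdsGT_zero
  refine hcomp.congr' ?_ |>.mono_right le_rfl
  filter_upwards [self_mem_nhdsWithin] with t ht
  have ht0 : (0:ℝ) < t := ht
  show (t⁻¹) ^ α * (μ (Set.Icc 0 (t⁻¹)⁻¹)).toReal = t ^ (-α) * (μ (Set.Icc 0 t)).toReal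
  rw [inv_inv, Real.rpow_neg ht0.le, ← Real.inv_rpow ht0.le]
end
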